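/- The category Dir of Dirichlet functors (the full subcategory of the functor category FintypeCatᵒᵖ ⥤ FintypeCat spanned by finite coproducts of representable presheaves) is equivalent to the arrow category of FintypeCat. An equivalence is given by sending a Dirichlet functor D to the function D(0!) : D(1) → D(0) induced by the unique map 0 → 1. -/

import Mathlib

/- STATEMENT 5: The category `Dir` of Dirichlet functors (the full subcategory of
`FintypeCatᵒᵖ ⥤ FintypeCat` spanned by finite coproducts of representable presheaves) is
equivalent to the arrow category of `FintypeCat`. An equivalence is given by sending a
Dirichlet functor `D` to the function `D(0!) : D(1) → D(0)`. -/

open CategoryTheory CategoryTheory.Limits Opposite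

noncomputable section

noncomputable instance (X Y : FintypeCat.{0}) : Fintype (X ⟶ Y) := by
  classical
  haveI : Fintype X := Fintype.ofFinite X
  haveI : Fintype Y := Fintype.ofFinite Y
  exact Fintype.ofEquiv (X → Y) ⟨FintypeCat.homMk, fun f x => f x, fun _ => rfl,
    fun f => FintypeCat.hom_ext _ _ (fun _ => rfl)⟩

/-- The finite coproduct `∐ᵢ Fin(–, dᵢ)` of representable presheaves `FintypeCatᵒᵖ ⥤ FintypeCat`. -/
def dirichletSum {I : Type} [Fintype I] (d : I → FintypeCat.{0}) :
    FintypeCat.{0}ᵒᵖ ⥤ FintypeCat.{0} where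
  obj X := FintypeCat.of (Σ i, (X.unop ⟶ d i))
  map f := FintypeCat.homMk fun x => ⟨x.1, f.unop ≫ x.2⟩

/-- A Dirichlet functor is a finite coproduct of representable presheaves. -/
def IsDirichlet (D : FintypeCat.{0}ᵒᵖ ⥤ FintypeCat.{0}) : Prop :=
  ∃ (I : Type) (_ : Fintype I) (d : I → FintypeCat.{0}), Nonempty (D ≅ dirichletSum d)

/-- The category of Dirichlet functors. -/
abbrev Dir := ObjectProperty.FullSubcategory IsDirichlet

/-- The empty finite set `0`. -/
abbrev X0 : FintypeCat.{0} := FintypeCat.of PEmpty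

/-- A one-element finite set `1`. -/
abbrev X1 : FintypeCat.{0} := FintypeCat.of PUnit

/-- The unique function `0! : 0 → 1`. -/
def zeroToOne : X0 ⟶ X1 := FintypeCat.homMk fun x => x.elim

section Aux

variable {I J : Type} [Fintype I] [Fintype J] {d : I → FintypeCat.{0}} {e : J → FintypeCat.{0}}

lemma dirichletSum_app_eq {E : FintypeCat.{0}ᵒᵖ ⥤ FintypeCat.{0}}
    (α : dirichletSum d ⟶ E) (X : FintypeCat.{0}ᵒᵖ) (i : I) (f : X.unop ⟶ d i) :
    α.app X (⟨i, f⟩ : Σ i, (X.unop ⟶ d i)) =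
      E.map f.op (α.app (op (d i)) (⟨i, 𝟙 (d i)⟩ : Σ j, (d i ⟶ d j))) := by
  have h := ConcreteCategory.congr_hom (α.naturality f.op) (⟨i, 𝟙 (d i)⟩ : Σ j, (d i ⟶ d j))
  exact h


/-- The canonical map `X0 ⟶ Y` from the empty set. -/
def fromEmpty (Y : FintypeCat.{0}) : X0 ⟶ Y := FintypeCat.homMk fun x => PEmpty.elim x

lemma sum_hom_ext (α β : dirichletSum d ⟶ dirichletSum e)
    (h1 : α.app (op X1) = β.app (op X1)) (h0 : α.app (op X0) = β.app (op X0)) :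
    α = β := by
  have key : ∀ i, α.app (op (d i)) (⟨i, 𝟙 (d i)⟩ : Σ j, (d i ⟶ d j))
      = β.app (op (d i)) (⟨i, 𝟙 (d i)⟩ : Σ j, (d i ⟶ d j)) := by
    intro i
    obtain ⟨⟨j, g⟩, ha⟩ : ∃ c : Σ j, (d i ⟶ e j),
      α.app (op (d i)) (⟨i, 𝟙 (d i)⟩ : Σ j, (d i ⟶ d j)) = c := ⟨_, rfl⟩
    obtain ⟨⟨j', g'⟩, hb⟩ : ∃ c : Σ j, (d i ⟶ e j),
      β.app (op (d i)) (⟨i, 𝟙 (d i)⟩ : Σ j, (d i ⟶ d j)) = c := ⟨_, rfl⟩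
    rw [ha, hb]
    have e0 := ConcreteCategory.congr_hom h0 (⟨i, fromEmpty (d i)⟩ : Σ j, (X0 ⟶ d j))
    rw [dirichletSum_app_eq α (op X0) i (fromEmpty (d i)),
        dirichletSum_app_eq β (op X0) i (fromEmpty (d i)), ha, hb] at e0
    have hj : j = j' := congrArg Sigma.fst e0
    subst hj
    refine congrArg (Sigma.mk j) ?_
    refine FintypeCat.hom_ext _ _ fun x => ?_
    have e1 := ConcreteCategory.congr_hom h1
      (⟨i, FintypeCat.homMk (fun _ => x)⟩ : Σ j, (X1 ⟶ d j))
    rw [dirichletSum_app_eq α (op X1) i (FintypeCat.homMk fun _ => x),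
        dirichletSum_app_eq β (op X1) i (FintypeCat.homMk fun _ => x), ha, hb] at e1
    have e1' : (⟨j, (FintypeCat.homMk fun _ : X1 => x) ≫ g⟩ : Σ j, (X1 ⟶ e j))
        = ⟨j, (FintypeCat.homMk fun _ : X1 => x) ≫ g'⟩ := e1
    exact ConcreteCategory.congr_hom (eq_of_heq (Sigma.ext_iff.mp e1').2) PUnit.unit
  refine NatTrans.ext (funext fun X => FintypeCat.hom_ext _ _ fun s => ?_)
  have this : ∀ t : Σ i, (X.unop ⟶ d i), α.app X t = β.app X t := by
    rintro ⟨i, f⟩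
    rw [dirichletSum_app_eq α X i f, dirichletSum_app_eq β X i f, key i]
  exact this s

lemma sigma_one_eq {J : Type} {e : J → FintypeCat.{0}} (c : Σ j, (X1 ⟶ e j)) (j : J)
    (h : c.1 = j) :
    (⟨j, FintypeCat.homMk fun _ => h ▸ (c.2 PUnit.unit)⟩ : Σ j, (X1 ⟶ e j)) = c := by
  obtain ⟨j', g⟩ := c
  subst h
  exact congrArg (Sigma.mk j') (FintypeCat.hom_ext _ _ fun y => by cases y; rfl)

lemma sigma_zero_eq {J : Type} {e : J → FintypeCat.{0}} (c : Σ j, (X0 ⟶ e j))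
    (g : X0 ⟶ e c.1) :
    (⟨c.1, g⟩ : Σ j, (X0 ⟶ e j)) = c := by
  obtain ⟨j, g'⟩ := c
  exact congrArg (Sigma.mk j) (FintypeCat.hom_ext _ _ fun x => PEmpty.elim x)

lemma sum_hom_exists (u : (dirichletSum d).obj (op X1) ⟶ (dirichletSum e).obj (op X1))
    (v : (dirichletSum d).obj (op X0) ⟶ (dirichletSum e).obj (op X0))
    (sq : u ≫ (dirichletSum e).map zeroToOne.op = (dirichletSum d).map zeroToOne.op ≫ v) :
    ∃ α : dirichletSum d ⟶ dirichletSum e, α.app (op X1) = u ∧ α.app (op X0) = v := by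
  set p : I → J := fun i => Sigma.fst (v (⟨i, fromEmpty (d i)⟩ : Σ j, (X0 ⟶ d j))) with hp
  have compat : ∀ (i : I) (k : X1 ⟶ d i), Sigma.fst (u (⟨i, k⟩ : Σ j, (X1 ⟶ d j))) = p i := by
    intro i k
    have hk : ((dirichletSum d).map zeroToOne.op (⟨i, k⟩ : Σ j, (X1 ⟶ d j)) : Σ i, (X0 ⟶ d i))
        = ⟨i, fromEmpty (d i)⟩ :=
      congrArg (fun t => (⟨i, t⟩ : Σ i, (X0 ⟶ d i)))
        (FintypeCat.hom_ext _ _ fun x => PEmpty.elim x)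
    have h : (dirichletSum e).map zeroToOne.op (u (⟨i, k⟩ : Σ j, (X1 ⟶ d j)))
        = v ((dirichletSum d).map zeroToOne.op (⟨i, k⟩ : Σ j, (X1 ⟶ d j))) :=
      ConcreteCategory.congr_hom sq (⟨i, k⟩ : Σ j, (X1 ⟶ d j))
    rw [hk] at h
    exact congrArg Sigma.fst h
  set hfun : ∀ i, d i ⟶ e (p i) :=
    fun i => FintypeCat.homMk fun x => compat i (FintypeCat.homMk fun _ => x) ▸
      (Sigma.snd (u (⟨i, FintypeCat.homMk fun _ => x⟩ : Σ j, (X1 ⟶ d j))) PUnit.unit) with hhfun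
  refine ⟨{ app := fun X => FintypeCat.homMk fun (s : Σ i, (X.unop ⟶ d i)) =>
      (⟨p s.1, s.2 ≫ hfun s.1⟩ : Σ j, (X.unop ⟶ e j)), naturality := fun X Y f => rfl }, ?_, ?_⟩
  · refine FintypeCat.hom_ext _ _ fun s => ?_
    revert s
    rintro ⟨i, k⟩
    have hk : k = (FintypeCat.homMk fun _ => k PUnit.unit : X1 ⟶ d i) :=
      FintypeCat.hom_ext _ _ fun y => by cases y; rfl
    rw [hk]
    exact sigma_one_eq (u (⟨i, FintypeCat.homMk fun _ => k PUnit.unit⟩ : Σ j, (X1 ⟶ d j))) (p i)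
      (compat i (FintypeCat.homMk fun _ => k PUnit.unit))
  · refine FintypeCat.hom_ext _ _ fun s => ?_
    revert s
    rintro ⟨i, k⟩
    have hk : k = fromEmpty (d i) := FintypeCat.hom_ext _ _ fun x => PEmpty.elim x
    rw [hk]
    exact sigma_zero_eq (v (⟨i, fromEmpty (d i)⟩ : Σ j, (X0 ⟶ d j))) (fromEmpty (d i) ≫ hfun i)

end Aux

/-- The functor from `Dir` to the arrow category. -/
def Fdir : Dir ⥤ Arrow FintypeCat.{0} where
  obj D := Arrow.mk (D.obj.map zeroToOne.op)
  map {D E} α := Arrow.homMk (u := α.hom.app (op X1)) (v := α.hom.app (op X0))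
    (α.hom.naturality zeroToOne.op).symm

theorem dir_equivalence_arrow :
    ∃ F : Dir ⥤ Arrow FintypeCat.{0},
      (∀ D : Dir, F.obj D = Arrow.mk (D.obj.map zeroToOne.op)) ∧ F.IsEquivalence := by
  refine ⟨Fdir, fun D => rfl, ?_⟩
  constructor
  · -- faithful
    constructor
    intro D E α β h
    obtain ⟨I, hI, d, ⟨φ⟩⟩ := D.2
    obtain ⟨J, hJ, e, ⟨ψ⟩⟩ := E.2
    have h1 : α.hom.app (op X1) = β.hom.app (op X1) := congrArg CommaMorphism.left h
    have h0 : α.hom.app (op X0) = β.hom.app (op X0) := congrArg CommaMorphism.right h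
    have key : φ.inv ≫ α.hom ≫ ψ.hom = φ.inv ≫ β.hom ≫ ψ.hom := by
      apply sum_hom_ext
      · simp only [NatTrans.comp_app, h1]
      · simp only [NatTrans.comp_app, h0]
    exact ObjectProperty.hom_ext (P := IsDirichlet) (by rwa [cancel_epi φ.inv, cancel_mono ψ.hom] at key)
  · -- full
    constructor
    intro D E sq
    change (⟨D.obj.obj (op X1), D.obj.obj (op X0), D.obj.map zeroToOne.op⟩ : Arrow FintypeCat.{0}) ⟶
      ⟨E.obj.obj (op X1), E.obj.obj (op X0), E.obj.map zeroToOne.op⟩ at sq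
    obtain ⟨I, hI, d, ⟨φ⟩⟩ := D.2
    obtain ⟨J, hJ, e, ⟨ψ⟩⟩ := E.2
    have w : sq.left ≫ E.obj.map zeroToOne.op = D.obj.map zeroToOne.op ≫ sq.right := sq.w
    set u := φ.inv.app (op X1) ≫ sq.left ≫ ψ.hom.app (op X1) with hu
    set v := φ.inv.app (op X0) ≫ sq.right ≫ ψ.hom.app (op X0) with hv
    have hsq : u ≫ (dirichletSum e).map zeroToOne.op
        = (dirichletSum d).map zeroToOne.op ≫ v := by
      rw [hu, hv, Category.assoc, Category.assoc, ← ψ.hom.naturality zeroToOne.op,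
        ← Category.assoc sq.left, w, ← Category.assoc (φ.inv.app (op X1)),
        ← Category.assoc (φ.inv.app (op X1)), ← φ.inv.naturality zeroToOne.op]
      simp only [Category.assoc]
    obtain ⟨γ, hγ1, hγ0⟩ := sum_hom_exists u v hsq
    refine ⟨ObjectProperty.homMk (φ.hom ≫ γ ≫ ψ.inv : D.obj ⟶ E.obj), ?_⟩
    apply CommaMorphism.ext
    · show (φ.hom ≫ γ ≫ ψ.inv).app (op X1) = sq.left
      simp only [NatTrans.comp_app, hγ1, hu]
      simp only [← Category.assoc, Iso.hom_inv_id_app]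
      simp only [Category.assoc, Iso.hom_inv_id_app, Category.id_comp]
      exact Category.comp_id _
    · show (φ.hom ≫ γ ≫ ψ.inv).app (op X0) = sq.right
      simp only [NatTrans.comp_app, hγ0, hv]
      simp only [← Category.assoc, Iso.hom_inv_id_app]
      simp only [Category.assoc, Iso.hom_inv_id_app, Category.id_comp]
      exact Category.comp_id _
  · -- essentially surjective
    constructor
    intro g
    classical
    letI : Fintype g.right := FintypeCat.fintype
    let d : ↑g.right → FintypeCat.{0} := fun b => FintypeCat.of {a : ↑g.left // g.hom a = b}
    refine ⟨⟨dirichletSum d, ↑g.right, inferInstance, d, ⟨Iso.refl _⟩⟩, ⟨?_⟩⟩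
    refine Arrow.isoMk ?_ ?_ ?_
    · exact
      { hom := FintypeCat.homMk fun (s : Σ b, (X1 ⟶ d b)) => (s.2 PUnit.unit).1
        inv := FintypeCat.homMk fun a =>
          (⟨g.hom a, FintypeCat.homMk fun _ => ⟨a, rfl⟩⟩ : Σ b, (X1 ⟶ d b))
        hom_inv_id := by
          refine FintypeCat.hom_ext _ _ fun s => ?_
          revert s
          rintro ⟨b, k⟩
          rcases hx : k PUnit.unit with ⟨a, hab⟩
          show (⟨g.hom (k PUnit.unit).1, FintypeCat.homMk fun _ => ⟨(k PUnit.unit).1, rfl⟩⟩ :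
            Σ b, (X1 ⟶ d b))
            = ⟨b, k⟩
          rw [hx]
          subst hab
          exact congrArg (Sigma.mk _) (FintypeCat.hom_ext _ _ fun y => by cases y; exact hx.symm)
        inv_hom_id := rfl }
    · exact
      { hom := FintypeCat.homMk fun (s : Σ b, (X0 ⟶ d b)) => s.1
        inv := FintypeCat.homMk fun b => (⟨b, fromEmpty (d b)⟩ : Σ b, (X0 ⟶ d b))
        hom_inv_id := FintypeCat.hom_ext _ _ fun (s : Σ b, (X0 ⟶ d b)) =>
          sigma_zero_eq s (fromEmpty (d s.1))
        inv_hom_id := rfl }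
    · exact FintypeCat.hom_ext _ _ fun (s : Σ b, (X1 ⟶ d b)) => (s.2 PUnit.unit).2
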